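/- (Lemma 2, quantitative form.) Let L : ℝ^d → ℝ be differentiable with gradient ∇L Lipschitz continuous with constant L₀, and let θ ∈ ℝ^d and α > 0. Let z be a random vector in ℝ^d whose coordinates are mutually independent with mean 0 and variance 1, and suppose E[‖z‖³] < ∞. Then the single-point zeroth-order gradient estimator ∇^{ZO_sp}L(θ) := (L(θ + αz)/α) · z satisfies ‖E[∇^{ZO_sp}L(θ)] − ∇L(θ)‖ ≤ (L₀ α / 2) · E[‖z‖³]. In particular, E[∇^{ZO_sp}L(θ)] converges to ∇L(θ) as α → 0, i.e. the estimator is asymptotically unbiased. -/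

import Mathlib

open MeasureTheory ProbabilityTheory
open scoped RealInnerProductSpace BigOperators

open intervalIntegral

lemma coord_abs_le_norm {d : ℕ} (x : EuclideanSpace ℝ (Fin d)) (i : Fin d) :
    |x i| ≤ ‖x‖ := by
  have h := abs_real_inner_le_norm (EuclideanSpace.single i (1:ℝ)) x
  simpa [EuclideanSpace.inner_single_left, EuclideanSpace.norm_single] using h

lemma integral_coord {Ω : Type*} [MeasurableSpace Ω] (μ : MeasureTheory.Measure Ω) {d : ℕ}
    (f : Ω → EuclideanSpace ℝ (Fin d)) (hf : MeasureTheory.Integrable f μ) (i : Fin d) :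
    (∫ ω, f ω ∂μ) i = ∫ ω, f ω i ∂μ := by
  have h := (EuclideanSpace.proj (𝕜 := ℝ) i).integral_comp_comm hf
  simp only [EuclideanSpace.proj, PiLp.proj_apply] at h
  exact h.symm

lemma pow_le_one_add_cube (a : ℝ) (ha : 0 ≤ a) (k : ℕ) (hk : k ≤ 3) :
    a ^ k ≤ 1 + a ^ 3 := by
  rcases le_total a 1 with h | h
  · have : a ^ k ≤ 1 := pow_le_one₀ ha h
    nlinarith [pow_nonneg ha 3]
  · have : a ^ k ≤ a ^ 3 := pow_le_pow_right₀ h hk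
    nlinarith

lemma taylor_bound {d : ℕ} (L : EuclideanSpace ℝ (Fin d) → ℝ) (L₀ : ℝ)
    (hdiff : Differentiable ℝ L)
    (hlip : ∀ x y, ‖gradient L x - gradient L y‖ ≤ L₀ * ‖x - y‖)
    (x v : EuclideanSpace ℝ (Fin d)) :
    |L (x + v) - L x - ⟪gradient L x, v⟫| ≤ L₀ / 2 * ‖v‖ ^ 2 := by
  have hgc : Continuous (gradient L) := by
    apply (LipschitzWith.of_dist_le_mul (K := ⟨|L₀|, abs_nonneg _⟩) ?_).continuous
    intro a b
    simp only [dist_eq_norm]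
    exact (hlip a b).trans (mul_le_mul_of_nonneg_right (le_abs_self _) (norm_nonneg _))
  set φ' : ℝ → ℝ := fun t => ⟪gradient L (x + t • v), v⟫ with hφ'
  have hderiv : ∀ t : ℝ, HasDerivAt (fun t => L (x + t • v)) (φ' t) t := by
    intro t
    have hc : HasDerivAt (fun t : ℝ => x + t • v) v t := by
      simpa using ((hasDerivAt_id t).smul_const v).const_add x
    have := ((hdiff (x + t • v)).hasGradientAt.hasFDerivAt).comp_hasDerivAt t hc
    refine this.congr_deriv ?_
    rw [InnerProductSpace.toDual_apply_apply]
  have hcont : Continuous φ' := by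
    apply Continuous.inner (hgc.comp (by continuity)) continuous_const
  have hftc : ∫ t in (0:ℝ)..1, φ' t = L (x + v) - L x := by
    have := intervalIntegral.integral_eq_sub_of_hasDerivAt
      (f := fun t => L (x + t • v)) (f' := φ') (a := 0) (b := 1)
      (fun t _ => hderiv t) (hcont.intervalIntegrable 0 1)
    simpa using this
  have key : L (x + v) - L x - ⟪gradient L x, v⟫
      = ∫ t in (0:ℝ)..1, (φ' t - φ' 0) := by
    rw [intervalIntegral.integral_sub (hcont.intervalIntegrable 0 1)
      (intervalIntegrable_const), hftc]
    simp [hφ']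
  rw [key]
  have hb : ∀ t ∈ Set.Ioc (0:ℝ) 1, |φ' t - φ' 0| ≤ (L₀ * ‖v‖ ^ 2) * t := by
    intro t ht
    have : φ' t - φ' 0 = ⟪gradient L (x + t • v) - gradient L (x + (0:ℝ) • v), v⟫ := by
      simp [hφ', inner_sub_left]
    rw [this]
    calc |⟪gradient L (x + t • v) - gradient L (x + (0:ℝ) • v), v⟫|
        ≤ ‖gradient L (x + t • v) - gradient L (x + (0:ℝ) • v)‖ * ‖v‖ :=
          abs_real_inner_le_norm _ _
      _ ≤ (L₀ * ‖(x + t • v) - (x + (0:ℝ) • v)‖) * ‖v‖ :=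
          mul_le_mul_of_nonneg_right (hlip _ _) (norm_nonneg _)
      _ = (L₀ * ‖v‖ ^ 2) * t := by
          have : (x + t • v) - (x + (0:ℝ) • v) = t • v := by
            simp
          rw [this, norm_smul]
          simp [abs_of_pos ht.1]
          ring
  have hnn : 0 ≤ L₀ * ‖v‖ ^ 2 := by
    have := (abs_nonneg (φ' 1 - φ' 0)).trans (hb 1 ⟨one_pos, le_refl 1⟩)
    linarith
  have hbound : ‖∫ t in (0:ℝ)..1, (φ' t - φ' 0)‖
      ≤ |∫ t in (0:ℝ)..1, (L₀ * ‖v‖ ^ 2) * t| := by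
    apply intervalIntegral.norm_integral_le_abs_of_norm_le
    · filter_upwards [ae_restrict_mem measurableSet_Ioc] with t ht
      rw [Set.uIoc_of_le zero_le_one] at ht
      simpa using hb t ht
    · exact (continuous_const.mul continuous_id).intervalIntegrable 0 1
  calc |∫ t in (0:ℝ)..1, (φ' t - φ' 0)| ≤ |∫ t in (0:ℝ)..1, (L₀ * ‖v‖ ^ 2) * t| := hbound
    _ = L₀ / 2 * ‖v‖ ^ 2 := by
        rw [intervalIntegral.integral_const_mul, integral_id]
        rw [abs_of_nonneg (by nlinarith)]
        ring

/-- **Lemma 2, quantitative form.** For `L : ℝ^d → ℝ` differentiable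
with `L₀`-Lipschitz gradient, and `z` a random vector with mutually independent
coordinates of mean `0` and variance `1` and `E[‖z‖³] < ∞`, the single-point
zeroth-order estimator `(L(θ+αz)/α) • z` satisfies
`‖E[∇^{ZO_sp}L(θ)] - ∇L(θ)‖ ≤ (L₀ α / 2) E[‖z‖³]`. -/
theorem stmt3 {Ω : Type*} [MeasurableSpace Ω] {μ : Measure Ω} [IsProbabilityMeasure μ]
    {d : ℕ} (L : EuclideanSpace ℝ (Fin d) → ℝ) (L₀ : ℝ)
    (hdiff : Differentiable ℝ L)
    (hlip : ∀ x y, ‖gradient L x - gradient L y‖ ≤ L₀ * ‖x - y‖)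
    (θ : EuclideanSpace ℝ (Fin d)) (α : ℝ) (hα : 0 < α)
    (z : Ω → EuclideanSpace ℝ (Fin d)) (hzm : Measurable z)
    (hindep : iIndepFun (fun i ω => z ω i) μ)
    (hmean : ∀ i, ∫ ω, z ω i ∂μ = 0)
    (hvar : ∀ i, ∫ ω, (z ω i) ^ 2 ∂μ = 1)
    (hmom3 : Integrable (fun ω => ‖z ω‖ ^ 3) μ) :
    ‖(∫ ω, (L (θ + α • z ω) / α) • z ω ∂μ) - gradient L θ‖
      ≤ L₀ * α / 2 * ∫ ω, ‖z ω‖ ^ 3 ∂μ := by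
  set g : EuclideanSpace ℝ (Fin d) := gradient L θ with hg
  have hzsm : AEStronglyMeasurable z μ := hzm.aestronglyMeasurable
  -- integrability of moments
  have hdom : Integrable (fun ω => 1 + ‖z ω‖ ^ 3) μ := (integrable_const 1).add hmom3
  have hmom : ∀ k : ℕ, k ≤ 3 → Integrable (fun ω => ‖z ω‖ ^ k) μ := by
    intro k hk
    refine hdom.mono' ((hzm.norm.pow_const k).aestronglyMeasurable) ?_
    filter_upwards with ω
    have h1 := pow_le_one_add_cube ‖z ω‖ (norm_nonneg _) k hk
    have h2 : (0:ℝ) ≤ 1 + ‖z ω‖ ^ 3 := by positivity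
    simp only [Real.norm_eq_abs, abs_of_nonneg (pow_nonneg (norm_nonneg _) k)]
    exact h1
  have hz_int : Integrable z μ := by
    refine hdom.mono' hzsm ?_
    filter_upwards with ω
    calc ‖z ω‖ = ‖z ω‖ ^ 1 := (pow_one _).symm
      _ ≤ 1 + ‖z ω‖ ^ 3 := pow_le_one_add_cube _ (norm_nonneg _) 1 (by norm_num)
  -- pieces
  set R : Ω → ℝ := fun ω => L (θ + α • z ω) - L θ - ⟪g, α • z ω⟫ with hR
  have hRb : ∀ ω, |R ω| ≤ L₀ / 2 * (α ^ 2 * ‖z ω‖ ^ 2) := by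
    intro ω
    have := taylor_bound L L₀ hdiff hlip θ (α • z ω)
    rw [norm_smul, mul_pow] at this
    simpa [hR, hg, abs_of_pos hα, Real.norm_eq_abs, sq_abs] using this
  have hsplit : ∀ ω, (L (θ + α • z ω) / α) • z ω
      = (L θ / α) • z ω + ⟪g, z ω⟫ • z ω + (R ω / α) • z ω := by
    intro ω
    have hL : L (θ + α • z ω) = L θ + α * ⟪g, z ω⟫ + R ω := by
      simp only [hR]
      rw [real_inner_smul_right]
      ring
    rw [← add_smul, ← add_smul]
    congr 1
    rw [hL, add_div, add_div, mul_div_cancel_left₀ _ hα.ne']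
  -- integrability of pieces
  have hcontL : Continuous L := hdiff.continuous
  have h1int : Integrable (fun ω => (L θ / α) • z ω) μ := hz_int.smul (L θ / α)
  have h2sm : AEStronglyMeasurable (fun ω => ⟪g, z ω⟫ • z ω) μ := by
    have hc : Continuous (fun w : EuclideanSpace ℝ (Fin d) => ⟪g, w⟫ • w) := by fun_prop
    exact (hc.measurable.comp hzm).aestronglyMeasurable
  have h2int : Integrable (fun ω => ⟪g, z ω⟫ • z ω) μ := by
    refine ((hmom 2 (by norm_num)).const_mul ‖g‖).mono' h2sm ?_
    filter_upwards with ω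
    rw [norm_smul]
    calc ‖⟪g, z ω⟫‖ * ‖z ω‖ ≤ (‖g‖ * ‖z ω‖) * ‖z ω‖ :=
          mul_le_mul_of_nonneg_right (by
            simpa [Real.norm_eq_abs] using abs_real_inner_le_norm g (z ω)) (norm_nonneg _)
      _ = ‖g‖ * ‖z ω‖ ^ 2 := by ring
  have h3sm : AEStronglyMeasurable (fun ω => (R ω / α) • z ω) μ := by
    have : Continuous (fun w : EuclideanSpace ℝ (Fin d) =>
        ((L (θ + α • w) - L θ - ⟪g, α • w⟫) / α) • w) := by
      fun_prop
    exact (this.measurable.comp hzm).aestronglyMeasurable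
  have h3bnd : ∀ ω, ‖(R ω / α) • z ω‖ ≤ L₀ * α / 2 * ‖z ω‖ ^ 3 := by
    intro ω
    rw [norm_smul]
    have : ‖R ω / α‖ ≤ L₀ * α / 2 * ‖z ω‖ ^ 2 := by
      rw [Real.norm_eq_abs, abs_div, abs_of_pos hα, div_le_iff₀ hα]
      calc |R ω| ≤ L₀ / 2 * (α ^ 2 * ‖z ω‖ ^ 2) := hRb ω
        _ = L₀ * α / 2 * ‖z ω‖ ^ 2 * α := by ring
    calc ‖R ω / α‖ * ‖z ω‖ ≤ (L₀ * α / 2 * ‖z ω‖ ^ 2) * ‖z ω‖ :=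
          mul_le_mul_of_nonneg_right this (norm_nonneg _)
      _ = L₀ * α / 2 * ‖z ω‖ ^ 3 := by ring
  have h3int : Integrable (fun ω => (R ω / α) • z ω) μ := by
    refine ((hmom3).const_mul (L₀ * α / 2)).mono' h3sm ?_
    filter_upwards with ω
    exact h3bnd ω
  -- integral of z is zero
  have hzint0 : ∫ ω, z ω ∂μ = 0 := by
    refine PiLp.ext fun i => ?_
    rw [integral_coord μ z hz_int i]
    simpa using hmean i
  have h1 : ∫ ω, (L θ / α) • z ω ∂μ = 0 := by
    rw [MeasureTheory.integral_smul, hzint0, smul_zero]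
  -- integral of second piece is g
  have hcm : ∀ j : Fin d, Measurable (fun ω => z ω j) := fun j => by
    have := (EuclideanSpace.proj (𝕜 := ℝ) j).continuous.measurable.comp hzm
    exact this
  have hcoord_int : ∀ i j : Fin d, Integrable (fun ω => z ω j * z ω i) μ := by
    intro i j
    refine (hmom 2 (by norm_num)).mono'
      ((hcm j).mul (hcm i)).aestronglyMeasurable ?_
    filter_upwards with ω
    rw [Real.norm_eq_abs, abs_mul]
    calc |z ω j| * |z ω i| ≤ ‖z ω‖ * ‖z ω‖ :=
          mul_le_mul (coord_abs_le_norm _ _) (coord_abs_le_norm _ _) (abs_nonneg _) (norm_nonneg _)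
      _ = ‖z ω‖ ^ 2 := (sq ‖z ω‖).symm
  have hcov : ∀ i j : Fin d, ∫ ω, z ω j * z ω i ∂μ = if j = i then 1 else 0 := by
    intro i j
    by_cases hij : j = i
    · subst hij
      simp only [if_pos rfl, ← sq]
      exact hvar j
    · rw [if_neg hij]
      have hind := (hindep.indepFun hij)
      have hmul := hind.integral_mul_eq_mul_integral (hcm j).aestronglyMeasurable
        (hcm i).aestronglyMeasurable
      have he : ∫ ω, z ω j * z ω i ∂μ = integral μ ((fun ω => z ω j) * fun ω => z ω i) := rfl
      rw [he, hmul, hmean j, zero_mul]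
  have h2 : ∫ ω, ⟪g, z ω⟫ • z ω ∂μ = g := by
    refine PiLp.ext fun i => ?_
    rw [integral_coord μ _ h2int i]
    have hrw : ∀ ω, (⟪g, z ω⟫ • z ω) i = ∑ j, g j * (z ω j * z ω i) := by
      intro ω
      have : ⟪g, z ω⟫ = ∑ j, g j * z ω j := by
        simp [PiLp.inner_apply, RCLike.inner_apply]
        exact Finset.sum_congr rfl fun _ _ => mul_comm _ _
      simp only [PiLp.smul_apply, smul_eq_mul, this, Finset.sum_mul]
      congr 1; ext j; ring
    calc ∫ ω, (⟪g, z ω⟫ • z ω) i ∂μ = ∫ ω, ∑ j, g j * (z ω j * z ω i) ∂μ := by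
          simp_rw [hrw]
      _ = ∑ j, g j * ∫ ω, z ω j * z ω i ∂μ := by
          rw [integral_finset_sum _ (fun j _ => (hcoord_int i j).const_mul (g j))]
          simp_rw [MeasureTheory.integral_const_mul]
      _ = g i := by
          simp_rw [hcov]
          rw [Finset.sum_eq_single i] <;> simp +contextual
  -- put it together
  have hint_split : ∫ ω, (L (θ + α • z ω) / α) • z ω ∂μ
      = g + ∫ ω, (R ω / α) • z ω ∂μ := by
    rw [show (fun ω => (L (θ + α • z ω) / α) • z ω)
        = fun ω => (L θ / α) • z ω + ⟪g, z ω⟫ • z ω + (R ω / α) • z ω from funext hsplit]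
    have h12 : Integrable (fun ω => (L θ / α) • z ω + ⟪g, z ω⟫ • z ω) μ := h1int.add h2int
    rw [integral_add h12 h3int, integral_add h1int h2int, h1, h2, zero_add]
  rw [hint_split, add_sub_cancel_left]
  calc ‖∫ ω, (R ω / α) • z ω ∂μ‖ ≤ ∫ ω, ‖(R ω / α) • z ω‖ ∂μ :=
        norm_integral_le_integral_norm _
    _ ≤ ∫ ω, L₀ * α / 2 * ‖z ω‖ ^ 3 ∂μ :=
        integral_mono h3int.norm (hmom3.const_mul _) h3bnd
    _ = L₀ * α / 2 * ∫ ω, ‖z ω‖ ^ 3 ∂μ := MeasureTheory.integral_const_mul _ _
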